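/- arXiv:1502.03863 — 5 statements merged into one kernel-verified Lean document; each statement's English description precedes it below -/
import Mathlib

section
/- Let $a_1, \dots, a_n$ be integers all $\leq -2$ and let $M$ be the tridiagonal matrix with diagonal $(a_1,\dots,a_n)$ and off-diagonal entries $1$. Then $\det M \neq 0$, and the ratio $\det M / \det M'$, where $M'$ is obtained by deleting the first row and column, equals the continued fraction $[a_1,\dots,a_n]^-$. -/
open Matrix

/-- The negative continued fraction `[a₁,…,aₙ]⁻`, computed in `ℚ`. -/
def ncf : List ℤ → ℚ
  | [] => 0
  | a :: l => (a : ℚ) - 1 / ncf l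

/-- The intersection matrix of the connected linear plumbing graph with weights
`a 0, …, a n`: tridiagonal with diagonal `a` and off-diagonal entries `1`. -/
def triMat (n : ℕ) (a : Fin n → ℤ) : Matrix (Fin n) (Fin n) ℚ :=
  Matrix.of fun i j =>
    if i = j then (a i : ℚ)
    else if (i : ℕ) + 1 = j ∨ (j : ℕ) + 1 = i then 1 else 0

def D : List ℤ → ℚ
  | [] => 1
  | [a] => (a : ℚ)
  | a :: b :: l => (a : ℚ) * D (b :: l) - D l

lemma triMat_submatrix (n : ℕ) (a : Fin (n+1) → ℤ) :
    (triMat (n+1) a).submatrix Fin.succ Fin.succ = triMat n (a ∘ Fin.succ) := by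
  ext i j
  simp only [triMat, submatrix_apply, of_apply, Function.comp_apply, Fin.succ_inj, Fin.val_succ]
  have h : ((i:ℕ)+1+1 = (j:ℕ)+1 ∨ (j:ℕ)+1+1 = (i:ℕ)+1) ↔ ((i:ℕ)+1 = j ∨ (j:ℕ)+1 = i) := by omega
  simp only [h]

lemma det_tri_rec (n : ℕ) (a : Fin (n+2) → ℤ) :
    (triMat (n+2) a).det = (a 0 : ℚ) * (triMat (n+1) (a ∘ Fin.succ)).det
      - (triMat n (a ∘ Fin.succ ∘ Fin.succ)).det := by
  rw [det_succ_row_zero, Fin.sum_univ_succ, Fin.sum_univ_succ]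
  have h0 : (triMat (n+2) a) 0 0 = (a 0 : ℚ) := by simp [triMat]
  have h1 : (triMat (n+2) a) 0 (Fin.succ 0) = 1 := by
    simp only [triMat, of_apply]
    rw [if_neg, if_pos] <;> simp [Fin.ext_iff]
  have hz : ∀ j : Fin n, (triMat (n+2) a) 0 (Fin.succ (Fin.succ j)) = 0 := by
    intro j
    simp only [triMat, of_apply]
    rw [if_neg, if_neg] <;> simp [Fin.ext_iff] <;> omega
  rw [h0, h1]
  simp only [hz, mul_zero, zero_mul, Finset.sum_const_zero, add_zero]
  rw [Fin.succAbove_zero, triMat_submatrix]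
  -- remaining: (-1)^(↑(Fin.succ 0)) * 1 * det (submatrix succ ((Fin.succ 0).succAbove)) term
  have key : ((triMat (n+2) a).submatrix Fin.succ (Fin.succ 0).succAbove).det
      = (triMat n (a ∘ Fin.succ ∘ Fin.succ)).det := by
    rw [det_succ_column_zero, Fin.sum_univ_succ]
    have e0 : ((triMat (n+2) a).submatrix Fin.succ (Fin.succ 0).succAbove) 0 0 = 1 := by
      simp only [submatrix_apply, triMat, of_apply, Fin.succAbove]
      norm_num [Fin.ext_iff, Fin.lt_def]
    have ez : ∀ i : Fin n,
        ((triMat (n+2) a).submatrix Fin.succ (Fin.succ 0).succAbove) (Fin.succ i) 0 = 0 := by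
      intro i
      simp only [submatrix_apply, triMat, of_apply, Fin.succAbove]
      rw [if_neg, if_neg] <;> simp [Fin.ext_iff, Fin.lt_def] <;> omega
    rw [e0]
    simp only [ez, mul_zero, zero_mul, Finset.sum_const_zero, add_zero]
    have hsa : ∀ j : Fin n, (Fin.succ 0 : Fin (n+2)).succAbove j.succ = j.succ.succ := by
      intro j
      rw [Fin.succAbove_of_le_castSucc]
      rw [Fin.le_def]
      simp
    have em : (((triMat (n+2) a).submatrix Fin.succ (Fin.succ 0).succAbove).submatrix
        (Fin.succAbove 0) Fin.succ) = triMat n (a ∘ Fin.succ ∘ Fin.succ) := by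
      ext i j
      rw [submatrix_apply, submatrix_apply, hsa, Fin.succAbove_zero]
      simp only [triMat, of_apply, Function.comp_apply, Fin.ext_iff, Fin.val_succ]
      split_ifs <;> try rfl
      all_goals (exfalso; omega)
    rw [em]
    norm_num
  rw [key]
  simp only [Fin.val_succ, Fin.val_zero, pow_zero, pow_one, pow_succ]
  ring

lemma det_triMat : ∀ n (a : Fin n → ℤ), (triMat n a).det = D (List.ofFn a) := by
  intro n
  induction n using Nat.strong_induction_on with
  | _ n ih =>
    match n with
    | 0 => intro a; simp [triMat, D, Matrix.det_fin_zero]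
    | 1 => intro a; simp [triMat, Matrix.det_fin_one, List.ofFn_succ, D]
    | (m+2) =>
      intro a
      rw [det_tri_rec, ih (m+1) (by omega), ih m (by omega)]
      rw [List.ofFn_succ (f := a), List.ofFn_succ (f := (fun i => a i.succ))]
      show (a 0 : ℚ) * D (List.ofFn (a ∘ Fin.succ)) - D (List.ofFn (a ∘ Fin.succ ∘ Fin.succ))
        = (a 0 : ℚ) * D (a 1 :: List.ofFn fun i => a i.succ.succ)
          - D (List.ofFn fun i => a i.succ.succ)
      rw [List.ofFn_succ (f := (a ∘ Fin.succ))]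
      rfl

lemma D_pos : ∀ l : List ℤ, (∀ x ∈ l, x ≤ -2) →
    1 ≤ (-1 : ℚ)^l.length * D l ∧
      (l ≠ [] → (-1 : ℚ)^l.tail.length * D l.tail + 1 ≤ (-1 : ℚ)^l.length * D l) := by
  intro l
  induction l with
  | nil => simp [D]
  | cons a l ih =>
    intro h
    have ha : (a : ℚ) ≤ -2 := by exact_mod_cast h a (List.mem_cons_self (a := a) (l := l))
    have ihl := ih (fun x hx => h x (List.mem_cons_of_mem a hx))
    match l, ihl with
    | [], _ =>
      constructor
      · simp [D]; linarith
      · intro _; simp [D]; linarith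
    | b :: m, ihl =>
      have h1 : 1 ≤ (-1 : ℚ)^(b::m).length * D (b::m) := ihl.1
      have h2 : (-1 : ℚ)^m.length * D m + 1 ≤ (-1 : ℚ)^(b::m).length * D (b::m) := by
        simpa using ihl.2 (by simp)
      have hD : D (a :: b :: m) = (a : ℚ) * D (b :: m) - D m := rfl
      have hpow : (-1 : ℚ)^(a::b::m).length = -(-1 : ℚ)^(b::m).length := by
        simp [pow_succ]
      have hpow2 : (-1 : ℚ)^(a::b::m).length * D (a::b::m)
          = (-a : ℚ) * ((-1 : ℚ)^(b::m).length * D (b::m)) - (-1:ℚ)^m.length * D m := by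
        rw [hD, hpow]
        have : (-1 : ℚ)^m.length = -(-1:ℚ)^(b::m).length := by simp [pow_succ]
        rw [this]; ring
      constructor
      · rw [hpow2]; nlinarith
      · intro _
        rw [hpow2]
        simp only [List.tail_cons]
        nlinarith

lemma D_ne_zero (l : List ℤ) (h : ∀ x ∈ l, x ≤ -2) : D l ≠ 0 := by
  have := (D_pos l h).1
  intro h0
  rw [h0, mul_zero] at this
  linarith

lemma ncf_eq : ∀ (a : ℤ) (l : List ℤ), (∀ x ∈ l, x ≤ -2) →
    ncf (a :: l) = D (a :: l) / D l := by
  intro a l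
  induction l generalizing a with
  | nil => intro _; simp [ncf, D]
  | cons b m ih =>
    intro h
    have hDl : D (b :: m) ≠ 0 := D_ne_zero _ h
    have ihb := ih b (fun x hx => h x (List.mem_cons_of_mem b hx))
    show (a : ℚ) - 1 / ncf (b :: m) = D (a :: b :: m) / D (b :: m)
    rw [ihb]
    have hD : D (a :: b :: m) = (a : ℚ) * D (b :: m) - D m := rfl
    rw [hD]
    rw [one_div_div]
    field_simp

/-- for integers `a₁,…,a_{n+1} ≤ -2`, the tridiagonal intersection
matrix `M` has nonzero determinant and `det M / det M' = [a₁,…,a_{n+1}]⁻`,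
where `M'` is obtained from `M` by deleting the first row and column
(when `n = 0`, `M'` is the empty matrix with `det M' = 1`). -/
theorem stmt_4 (n : ℕ) (a : Fin (n + 1) → ℤ) (hle : ∀ i, a i ≤ -2) :
    (triMat (n + 1) a).det ≠ 0 ∧
      (triMat (n + 1) a).det /
        ((triMat (n + 1) a).submatrix Fin.succ Fin.succ).det = ncf (List.ofFn a) := by
  have hmem : ∀ (m : ℕ) (f : Fin m → ℤ), (∀ i, f i ≤ -2) → ∀ x ∈ List.ofFn f, x ≤ -2 := by
    intro m f hf x hx
    obtain ⟨i, rfl⟩ := (List.mem_ofFn (f := f) (a := x)).mp hx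
    exact hf i
  have hd : (triMat (n+1) a).det = D (List.ofFn a) := det_triMat _ a
  have hsub : ((triMat (n+1) a).submatrix Fin.succ Fin.succ).det
      = D (List.ofFn (a ∘ Fin.succ)) := by
    rw [triMat_submatrix]; exact det_triMat _ _
  refine ⟨by rw [hd]; exact D_ne_zero _ (hmem _ a hle), ?_⟩
  rw [hd, hsub, List.ofFn_succ (f := a),
    ncf_eq (a 0) (List.ofFn fun i => a i.succ)
      (hmem n (a ∘ Fin.succ) (fun i => hle i.succ))]
  rfl
end

section
/- Two strings of integers $(a_1,\dots,a_n)$ and $(b_1,\dots,b_m)$ with all entries $\leq -2$ satisfy $1/[a_1,\dots,a_n]^- + 1/[b_1,\dots,b_m]^- = -1$ if and only if the tridiagonal intersection matrix of the linear graph with weights $(b_m, \dots, b_1, -1, a_1, \dots, a_n)$ has determinant zero. -/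
open Matrix

/-- The intersection matrix of the connected linear graph with weights given by
the list `l`: tridiagonal with diagonal `l` and sub/super-diagonal entries `1`. -/
def triMatL (l : List ℤ) : Matrix (Fin l.length) (Fin l.length) ℚ :=
  Matrix.of fun i j =>
    if i = j then (l.get i : ℚ)
    else if (i : ℕ) + 1 = j ∨ (j : ℕ) + 1 = i then 1 else 0

/-- The (signed) continuant of a list. -/
def K : List ℤ → ℚ
  | [] => 1
  | [c] => (c : ℚ)
  | c :: d :: l => (c : ℚ) * K (d :: l) - K l

/-- Continuant of the tail (0 for the empty list). -/
def Kt : List ℤ → ℚ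
  | [] => 0
  | _ :: l => K l

/-- Continuant of `dropLast` (0 for the empty list). -/
def Kd : List ℤ → ℚ
  | [] => 0
  | a :: l => K ((a :: l).dropLast)

lemma Kd_cons (c : ℤ) (l : List ℤ) : Kd (c :: l) = K ((c :: l).dropLast) := rfl

lemma Kd_concat (u : List ℤ) (x : ℤ) : Kd (u ++ [x]) = K u := by
  have h : Kd (u ++ [x]) = K ((u ++ [x]).dropLast) := by
    cases u <;> rfl
  rw [h, List.dropLast_concat]

lemma K_cons (c : ℤ) (l : List ℤ) : K (c :: l) = (c : ℚ) * K l - Kt l := by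
  cases l <;> simp [K, Kt]

lemma det_cons2 (c d : ℤ) (l : List ℤ) :
    (triMatL (c :: d :: l)).det
      = (c : ℚ) * (triMatL (d :: l)).det - (triMatL l).det := by
  set M : Matrix (Fin (l.length + 2)) (Fin (l.length + 2)) ℚ := triMatL (c :: d :: l) with hM
  have h := Matrix.det_succ_row_zero (n := l.length + 1) M
  rw [Fin.sum_univ_succ, Fin.sum_univ_succ] at h
  have hz : ∀ j : Fin l.length, M 0 j.succ.succ = 0 := by
    intro j; simp [hM, triMatL, Fin.ext_iff]
  have h00 : M 0 0 = (c : ℚ) := by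
    simp [hM, triMatL, Fin.ext_iff]
  have h01 : M 0 (Fin.succ 0) = 1 := by
    simp [hM, triMatL, Fin.ext_iff]
  have hsub0 : M.submatrix Fin.succ ((0 : Fin (l.length+2)).succAbove) = triMatL (d :: l) := by
    ext i j
    simp only [Matrix.submatrix_apply, Fin.succAbove_zero, hM]
    simp [triMatL, Fin.ext_iff]
  have hsub1 : (M.submatrix Fin.succ ((Fin.succ 0 : Fin (l.length+2)).succAbove)).det
      = (triMatL l).det := by
    have key1 : ((Fin.succ 0 : Fin (l.length+2)).succAbove) (0 : Fin (l.length+1)) = 0 := by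
      rw [Fin.succAbove_of_castSucc_lt] <;> simp [Fin.lt_def]
    have key2 : ∀ j : Fin l.length,
        ((Fin.succ 0 : Fin (l.length+2)).succAbove) j.succ = j.succ.succ := by
      intro j
      rw [Fin.succAbove_of_le_castSucc] <;> simp [Fin.le_def]
    set N := M.submatrix Fin.succ ((Fin.succ 0 : Fin (l.length+2)).succAbove) with hN
    have h' := Matrix.det_succ_column_zero (n := l.length) N
    rw [Fin.sum_univ_succ] at h'
    have n00 : N 0 0 = 1 := by
      simp only [hN, Matrix.submatrix_apply, key1, hM]
      simp [triMatL, Fin.ext_iff]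
    have nz : ∀ i : Fin l.length, N i.succ 0 = 0 := by
      intro i
      simp only [hN, Matrix.submatrix_apply, key1, hM]
      simp [triMatL, Fin.ext_iff]
    have hsub : N.submatrix ((0 : Fin (l.length+1)).succAbove) Fin.succ = triMatL l := by
      ext i j
      simp only [hN, Matrix.submatrix_apply, Fin.succAbove_zero, key2, hM]
      simp [triMatL, Fin.ext_iff]
    rw [h', n00]
    simp only [nz, hsub]
    simp
  refine h.trans ?_
  rw [h00, h01, hsub0, hsub1]
  simp only [hz]
  simp [sub_eq_add_neg]

lemma det_eq_K : ∀ l : List ℤ, (triMatL l).det = K l := by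
  intro l
  induction l using K.induct with
  | case1 =>
    have : (triMatL []).det = 1 := Matrix.det_fin_zero
    simpa [K] using this
  | case2 c =>
    have h := Matrix.det_fin_one (A := triMatL [c])
    refine h.trans ?_
    simp [triMatL, K]
  | case3 c d l ih1 ih2 =>
    rw [det_cons2, ih1, ih2, K]

lemma Kt_dropLast_cons (d : ℤ) (x : List ℤ) : Kt ((d :: x).dropLast) = Kd x := by
  cases x <;> simp [Kt, Kd]

lemma Kd_cons2 (c d : ℤ) (x : List ℤ) :
    Kd (c :: d :: x) = (c : ℚ) * Kd (d :: x) - Kd x := by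
  rw [Kd_cons]
  show K (c :: (d :: x).dropLast) = _
  rw [K_cons, Kt_dropLast_cons, Kd_cons]

lemma K_split : ∀ x y : List ℤ, K (x ++ y) = K x * K y - Kd x * Kt y := by
  intro x
  induction x using K.induct with
  | case1 => intro y; simp [K, Kd]
  | case2 c =>
    intro y
    cases y with
    | nil => simp [K, Kd, Kt]
    | cons e y' =>
      show K (c :: e :: y') = K [c] * K (e :: y') - Kd [c] * Kt (e :: y')
      rw [show K (c :: e :: y') = (c : ℚ) * K (e :: y') - K y' from rfl,
        show K [c] = (c : ℚ) from rfl, show Kd [c] = K [] from rfl,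
        show K [] = (1 : ℚ) from rfl, show Kt (e :: y') = K y' from rfl]
      ring
  | case3 c d x' ih1 ih2 =>
    intro y
    show K (c :: d :: (x' ++ y)) = _
    rw [show (c : ℤ) :: d :: (x' ++ y) = c :: ((d :: x') ++ y) from rfl, K_cons,
      show Kt ((d :: x') ++ y) = K (x' ++ y) from rfl, ih1, ih2, Kd_cons2, K_cons (l := d :: x'),
      show Kt (d :: x') = K x' from rfl]
    ring

lemma K_reverse : ∀ l : List ℤ, K l.reverse = K l := by
  intro l
  induction l using K.induct with
  | case1 => simp
  | case2 c => simp
  | case3 c d l ih1 ih2 =>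
    have h1 : (c :: d :: l).reverse = (d :: l).reverse ++ [c] := by simp
    rw [h1, K_split]
    have h2 : Kd ((d :: l).reverse) = K l := by
      have hrev : (d :: l).reverse = l.reverse ++ [d] := by simp
      rw [hrev, Kd_concat, ih2]
    rw [h2, ih1]
    simp [K, Kt]
    ring

/-- Key facts about `ncf` on lists with entries `≤ -2`. -/
lemma ncf_facts : ∀ l : List ℤ, l ≠ [] → (∀ x ∈ l, x ≤ -2) →
    ncf l < -1 ∧ K l ≠ 0 ∧ Kt l ≠ 0 ∧ ncf l = K l / Kt l := by
  intro l
  induction l with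
  | nil => intro h; exact absurd rfl h
  | cons c l ih =>
    intro _ hle
    have hc : (c : ℚ) ≤ -2 := by exact_mod_cast hle c (by simp)
    cases l with
    | nil =>
      refine ⟨by simp [ncf]; linarith, ?_, ?_, ?_⟩
      · simp [K]; intro h; rw [h] at hc; norm_num at hc
      · simp [Kt, K]
      · simp [ncf, Kt, K]
    | cons d l' =>
      obtain ⟨h1, h2, h3, h4⟩ := ih (by simp) (fun x hx => hle x (by simp [hx]))
      have hne : ncf (d :: l') ≠ 0 := by intro h; rw [h] at h1; norm_num at h1
      have hinv : -1 < 1 / ncf (d :: l') ∧ 1 / ncf (d :: l') < 0 := by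
        constructor
        · rw [lt_div_iff_of_neg (by linarith)]; linarith
        · exact div_neg_of_pos_of_neg one_pos (by linarith)
      have hval : ncf (c :: d :: l') = (c : ℚ) - 1 / ncf (d :: l') := rfl
      have hlt : ncf (c :: d :: l') < -1 := by rw [hval]; linarith [hinv.1]
      have h4' : 1 / ncf (d :: l') = Kt (d :: l') / K (d :: l') := by
        rw [h4, one_div_div]
      have hKval : ncf (c :: d :: l') = K (c :: d :: l') / K (d :: l') := by
        rw [hval, h4', K_cons (c := c) (l := d :: l'),
          show Kt (d :: l') = K l' from rfl]
        field_simp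
      have hK : K (c :: d :: l') ≠ 0 := by
        intro h
        rw [h] at hKval
        rw [hKval] at hlt
        norm_num at hlt
      exact ⟨hlt, hK, h2, by rw [hKval]; rfl⟩

/-- for strings `(a₁,…,aₙ)` and `(b₁,…,b_m)` with all entries
`≤ -2`, one has `1/[a₁,…,aₙ]⁻ + 1/[b₁,…,b_m]⁻ = -1` iff the intersection
matrix of the linear graph with weights `(b_m,…,b₁,-1,a₁,…,aₙ)` has
determinant zero. -/
theorem stmt_5 (a b : List ℤ) (ha : a ≠ []) (hb : b ≠ [])
    (hlea : ∀ x ∈ a, x ≤ -2) (hleb : ∀ x ∈ b, x ≤ -2) :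
    1 / ncf a + 1 / ncf b = -1 ↔ (triMatL (b.reverse ++ [-1] ++ a)).det = 0 := by
  obtain ⟨-, hKa, hKta, hva⟩ := ncf_facts a ha hlea
  obtain ⟨-, hKb, hKtb, hvb⟩ := ncf_facts b hb hleb
  rw [det_eq_K]
  have hassoc : b.reverse ++ [-1] ++ a = b.reverse ++ ((-1 : ℤ) :: a) := by simp
  rw [hassoc, K_split]
  have hKrev : K b.reverse = K b := K_reverse b
  have hKdrev : Kd b.reverse = Kt b := by
    cases b with
    | nil => exact absurd rfl hb
    | cons b0 bt =>
      have h1 : (b0 :: bt).reverse = bt.reverse ++ [b0] := by simp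
      rw [h1, Kd_concat, K_reverse]
      rfl
  have hKneg : K ((-1 : ℤ) :: a) = -K a - Kt a := by
    rw [K_cons]; push_cast; ring
  have hKtneg : Kt ((-1 : ℤ) :: a) = K a := rfl
  rw [hKrev, hKdrev, hKneg, hKtneg, hva, hvb, one_div_div, one_div_div,
    div_add_div _ _ hKa hKb, div_eq_iff (mul_ne_zero hKa hKb)]
  constructor <;> intro h <;> linear_combination -h
end

section
/- Define $I(a_1,\dots,a_n) = \sum_{i=1}^n (-3 - a_i)$ for a string of integers. If $(a_1,\dots,a_n)$ and $(b_1,\dots,b_m)$ are complementary strings (all entries $\leq -2$ and $1/[a_1,\dots,a_n]^- + 1/[b_1,\dots,b_m]^- = -1$), then $I(a_1,\dots,a_n) + I(b_1,\dots,b_m) = -2$. -/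
/-- `I(a₁,…,aₙ) = ∑ᵢ (-3 - aᵢ)`. -/
def Istr (l : List ℤ) : ℤ := (l.map fun x => -3 - x).sum

lemma Istr_cons (x : ℤ) (t : List ℤ) : Istr (x :: t) = -3 - x + Istr t := by
  simp [Istr]

lemma ncf_lt_neg_one : ∀ l : List ℤ, l ≠ [] → (∀ x ∈ l, x ≤ -2) → ncf l < -1 := by
  intro l
  induction l with
  | nil => simp
  | cons a t ih =>
    intro _ hle
    have ha : a ≤ -2 := hle a (by simp)
    have haq : (a : ℚ) ≤ -2 := by exact_mod_cast ha
    by_cases ht : t = []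
    · subst ht; simp [ncf]; linarith
    · have h1 := ih ht (fun x hx => hle x (by simp [hx]))
      have h2 : ncf t ≠ 0 := by intro h; rw [h] at h1; norm_num at h1
      have h3 : 1 / ncf t < 0 := by apply one_div_neg.mpr; linarith
      have h4 : -1 < 1 / ncf t := by nlinarith [mul_one_div_cancel h2]
      show (a : ℚ) - 1 / ncf t < -1
      linarith

lemma ncf_cons_bounds (a : ℤ) (t : List ℤ) (ht : ∀ x ∈ t, x ≤ -2) :
    (a : ℚ) ≤ ncf (a :: t) ∧ ncf (a :: t) < a + 1 := by
  show (a : ℚ) ≤ (a : ℚ) - 1 / ncf t ∧ (a : ℚ) - 1 / ncf t < a + 1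
  by_cases h : t = []
  · subst h; simp [ncf]
  · have h1 := ncf_lt_neg_one t h ht
    have h2 : ncf t ≠ 0 := by intro h; rw [h] at h1; norm_num at h1
    have h3 : 1 / ncf t < 0 := by apply one_div_neg.mpr; linarith
    have h4 : -1 < 1 / ncf t := by nlinarith [mul_one_div_cancel h2]
    constructor <;> linarith

lemma ncf_cons_strict (a : ℤ) (t : List ℤ) (h : t ≠ []) (ht : ∀ x ∈ t, x ≤ -2) :
    (a : ℚ) < ncf (a :: t) := by
  have h1 := ncf_lt_neg_one t h ht
  have h3 : 1 / ncf t < 0 := by apply one_div_neg.mpr; linarith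
  show (a : ℚ) < (a : ℚ) - 1 / ncf t
  linarith

lemma move (u β : ℚ) (hu : u ≠ 0) (hβ : β ≠ 0) (hβ1 : β + 1 ≠ 0)
    (hα : -2 - 1 / u ≠ 0) (h : 1 / (-2 - 1 / u) + 1 / β = -1) :
    1 / u + 1 / (β + 1) = -1 := by
  have h2u : -2 * u - 1 ≠ 0 := by
    have := mul_ne_zero hα hu
    intro hc; apply this; field_simp; linarith
  have h2u' : -(2 * u) - 1 ≠ 0 := by intro hc; apply h2u; linarith
  have hd : -2 - 1 / u = (-2 * u - 1) / u := by field_simp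
  rw [hd, one_div_div] at h
  field_simp [h2u'] at h
  field_simp
  have hne : -(u * 2) - 1 ≠ 0 := by intro hc; apply h2u'; linarith
  have h3 : u * β = (-β - 1) * (-(u * 2) - 1) := by rw [← div_eq_iff hne]; linarith
  linear_combination -h3

lemma key : ∀ N : ℕ, ∀ a b : List ℤ, a.length + b.length ≤ N → a ≠ [] → b ≠ [] →
    (∀ x ∈ a, x ≤ -2) → (∀ x ∈ b, x ≤ -2) → 1 / ncf a + 1 / ncf b = -1 →
    Istr a + Istr b = -2 := by
  intro N
  induction N with
  | zero =>
    intro a b hlen ha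
    rcases a with _ | ⟨a1, t⟩
    · exact absurd rfl ha
    · simp at hlen
  | succ N IH =>
    intro a b hlen ha hb hlea hleb hcomp
    rcases a with _ | ⟨a1, at'⟩
    · exact absurd rfl ha
    rcases b with _ | ⟨b1, bt⟩
    · exact absurd rfl hb
    clear ha hb
    have hta : ∀ x ∈ at', x ≤ -2 := fun x hx => hlea x (by simp [hx])
    have htb : ∀ x ∈ bt, x ≤ -2 := fun x hx => hleb x (by simp [hx])
    have ha1 : a1 ≤ -2 := hlea a1 (by simp)
    have hb1 : b1 ≤ -2 := hleb b1 (by simp)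
    have hα : ncf (a1 :: at') < -1 := ncf_lt_neg_one _ (by simp) hlea
    have hβ : ncf (b1 :: bt) < -1 := ncf_lt_neg_one _ (by simp) hleb
    have hα0 : ncf (a1 :: at') ≠ 0 := by intro h; rw [h] at hα; norm_num at hα
    have hβ0 : ncf (b1 :: bt) ≠ 0 := by intro h; rw [h] at hβ; norm_num at hβ
    obtain ⟨hA1, hA2⟩ := ncf_cons_bounds a1 at' hta
    obtain ⟨hB1, hB2⟩ := ncf_cons_bounds b1 bt htb
    by_cases h2 : a1 = -2
    · subst h2
      by_cases hat : at' = []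
      · -- a = [-2] : base case, forces b = [-2]
        subst hat
        have hA : ncf [(-2 : ℤ)] = -2 := by simp [ncf]
        rw [hA] at hcomp
        have hBv : ncf (b1 :: bt) = -2 := by
          have h1 : 1 / ncf (b1 :: bt) = -(1/2) := by linarith
          field_simp at h1
          linarith
        have hb1' : b1 = -2 := by
          have h1 : (-2 : ℚ) < (b1 : ℚ) + 1 := by rw [← hBv]; exact hB2
          have h2 : (-3 : ℤ) < b1 := by exact_mod_cast (by linarith : (-3 : ℚ) < (b1 : ℚ))
          omega
        have hbt : bt = [] := by
          by_contra h
          have := ncf_cons_strict b1 bt h htb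
          rw [hBv, hb1'] at this
          norm_num at this
        subst hbt; subst hb1'
        decide
      · -- a = -2 :: at', at' ≠ [] : move on b
        have hu := ncf_lt_neg_one at' hat hta
        have hu0 : ncf at' ≠ 0 := by intro h; rw [h] at hu; norm_num at hu
        have hαform : ncf ((-2 : ℤ) :: at') = -2 - 1 / ncf at' := by simp [ncf]
        have h1α : 1 / ncf ((-2 : ℤ) :: at') < -(1/2) := by
          have hαgt : (-2 : ℚ) < ncf ((-2 : ℤ) :: at') := by
            rw [hαform]
            have : 1 / ncf at' < 0 := one_div_neg.mpr (by linarith)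
            linarith
          nlinarith [mul_one_div_cancel hα0]
        have h1β : -(1/2) < 1 / ncf (b1 :: bt) := by linarith
        have hβlt : ncf (b1 :: bt) < -2 := by
          nlinarith [mul_one_div_cancel hβ0]
        have hb13 : b1 ≤ -3 := by
          have h1 : (b1 : ℚ) < -2 := lt_of_le_of_lt hB1 hβlt
          have h2 : b1 < -2 := by exact_mod_cast h1
          omega
        have hβ1ne : ncf (b1 :: bt) + 1 ≠ 0 := by intro h; nlinarith
        have hcomp' : 1 / ncf at' + 1 / (ncf (b1 :: bt) + 1) = -1 := by
          apply move (ncf at') (ncf (b1 :: bt)) hu0 hβ0 hβ1ne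
          · rw [← hαform]; exact hα0
          · rw [← hαform]; exact hcomp
        have hncfb' : ncf ((b1 + 1) :: bt) = ncf (b1 :: bt) + 1 := by
          show ((b1 + 1 : ℤ) : ℚ) - 1 / ncf bt = (b1 : ℚ) - 1 / ncf bt + 1
          push_cast; ring
        have hIH := IH at' ((b1 + 1) :: bt)
          (by simp at hlen ⊢; omega) hat (by simp)
          hta
          (by
            intro x hx
            rcases List.mem_cons.mp hx with h | h
            · omega
            · exact htb x h)
          (by rw [hncfb']; exact hcomp')
        rw [Istr_cons] at hIH ⊢
        rw [Istr_cons]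
        omega
    · -- a1 ≤ -3 : move on a
      have ha13 : a1 ≤ -3 := by omega
      have hαlt : ncf (a1 :: at') < -2 := by
        have : (a1 : ℚ) + 1 ≤ -2 := by
          have : (a1 : ℚ) ≤ -3 := by exact_mod_cast ha13
          linarith
        linarith
      have h1α : -(1/2) < 1 / ncf (a1 :: at') := by
        nlinarith [mul_one_div_cancel hα0]
      have h1β : 1 / ncf (b1 :: bt) < -(1/2) := by linarith
      have hβgt : (-2 : ℚ) < ncf (b1 :: bt) := by
        nlinarith [mul_one_div_cancel hβ0]
      have hb1' : b1 = -2 := by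
        have h1 : (-3 : ℚ) < (b1 : ℚ) := by linarith
        have h2 : (-3 : ℤ) < b1 := by exact_mod_cast h1
        omega
      subst hb1'
      have hbt : bt ≠ [] := by
        intro h; subst h
        have : ncf [(-2 : ℤ)] = -2 := by simp [ncf]
        rw [this] at hβgt
        norm_num at hβgt
      have hv := ncf_lt_neg_one bt hbt htb
      have hv0 : ncf bt ≠ 0 := by intro h; rw [h] at hv; norm_num at hv
      have hβform : ncf ((-2 : ℤ) :: bt) = -2 - 1 / ncf bt := by simp [ncf]
      have hα1ne : ncf (a1 :: at') + 1 ≠ 0 := by intro h; linarith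
      have hmv : 1 / ncf bt + 1 / (ncf (a1 :: at') + 1) = -1 := by
        apply move (ncf bt) (ncf (a1 :: at')) hv0 hα0 hα1ne
        · rw [← hβform]; exact hβ0
        · rw [← hβform]; linarith
      have hncfa' : ncf ((a1 + 1) :: at') = ncf (a1 :: at') + 1 := by
        show ((a1 + 1 : ℤ) : ℚ) - 1 / ncf at' = (a1 : ℚ) - 1 / ncf at' + 1
        push_cast; ring
      have hIH := IH ((a1 + 1) :: at') bt
        (by simp at hlen ⊢; omega) (by simp) hbt
        (by
          intro x hx
          rcases List.mem_cons.mp hx with h | h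
          · omega
          · exact hta x h)
        htb
        (by rw [hncfa']; linarith)
      rw [Istr_cons] at hIH ⊢
      rw [Istr_cons]
      omega

/-- if `(a₁,…,aₙ)` and `(b₁,…,b_m)` are complementary strings
(all entries `≤ -2` and `1/[a]⁻ + 1/[b]⁻ = -1`), then `I(a) + I(b) = -2`. -/
theorem stmt_6 (a b : List ℤ) (ha : a ≠ []) (hb : b ≠ [])
    (hlea : ∀ x ∈ a, x ≤ -2) (hleb : ∀ x ∈ b, x ≤ -2)
    (hcomp : 1 / ncf a + 1 / ncf b = -1) :
    Istr a + Istr b = -2 := by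
  exact key (a.length + b.length) a b le_rfl ha hb hlea hleb hcomp
end

section
/- Let $(a_1,\dots,a_n)$ with $n \geq 1$ and all $a_i \leq -2$, and let $x = [a_1,\dots,a_n]^-$. Then $-1 - 1/x$ is again a rational number that equals $[b_1,\dots,b_m]^-$ for some string $(b_1,\dots,b_m)$ with all $b_j \leq -2$; i.e., every string with entries $\leq -2$ admits a complementary string. -/
lemma ncf_lt_neg_one_s7 (a : List ℤ) (ha : a ≠ []) (h : ∀ x ∈ a, x ≤ -2) :
    ncf a < -1 := by
  induction a with
  | nil => exact absurd rfl ha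
  | cons x l ih =>
    have hx : x ≤ -2 := h x (by simp)
    have hx' : (x : ℚ) ≤ -2 := by exact_mod_cast hx
    by_cases hl : l = []
    · subst hl
      simp only [ncf]
      norm_num
      linarith
    · have hlt := ih hl (fun y hy => h y (List.mem_cons_of_mem _ hy))
      have h0 : ncf l < 0 := by linarith
      have : -1 < 1 / ncf l := by
        rw [lt_div_iff_of_neg h0]; linarith
      simp only [ncf]
      linarith

lemma repr_aux (n : ℕ) : ∀ x : ℚ, x.den ≤ n → x < -1 →
    ∃ b : List ℤ, b ≠ [] ∧ (∀ i ∈ b, i ≤ -2) ∧ ncf b = x := by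
  induction n with
  | zero => intro x hx _; exact absurd (hx.trans_lt' x.pos) (by simp)
  | succ n ih =>
    intro x hxd hlt
    by_cases h1 : x.den = 1
    · refine ⟨[x.num], by simp, ?_, ?_⟩
      · intro i hi
        simp only [List.mem_singleton] at hi
        subst hi
        have : (x.num : ℚ) = x := by
          rw [← Rat.num_div_den x, h1]; norm_num
        have : (x.num : ℚ) < -1 := by rw [this]; exact hlt
        have : x.num < -1 := by exact_mod_cast this
        omega
      · simp only [ncf]
        norm_num
        rw [← Rat.num_div_den x, h1]; norm_num
    · -- x is not an integer
      set q : ℤ := (x.den : ℤ) with hq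
      have hq0 : (0 : ℚ) < (q : ℚ) := by rw [hq]; exact_mod_cast x.pos
      set a1 : ℤ := ⌊x⌋ with ha1
      set r : ℤ := x.num - a1 * q with hr
      have hxeq : x = (x.num : ℚ) / (q : ℚ) := by
        exact_mod_cast (Rat.num_div_den x).symm
      have hfpos : (0 : ℚ) < x - a1 := by
        have h2 : (a1 : ℚ) ≤ x := Int.floor_le x
        rcases lt_or_eq_of_le h2 with h | h
        · linarith
        · exfalso; apply h1
          have : x = (a1 : ℚ) := h.symm
          rw [this]; exact Rat.den_intCast a1
      have hflt : x - a1 < 1 := by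
        have := Int.lt_floor_add_one x
        linarith
      have hq0' : (q:ℚ) ≠ 0 := ne_of_gt hq0
      have hnum : (x.num : ℚ) = x * q := by
        conv_rhs => rw [hxeq]
        field_simp
      have hrq : (r : ℚ) = (x - a1) * q := by
        rw [hr]; push_cast; rw [hnum]; ring
      have hr0 : 0 < r := by
        have : (0:ℚ) < (r:ℚ) := by rw [hrq]; positivity
        exact_mod_cast this
      have hrltq : r < q := by
        have : (r:ℚ) < (q:ℚ) := by
          rw [hrq]
          nlinarith
        exact_mod_cast this
      -- x' = -q / r
      set x' : ℚ := -(q : ℚ) / (r : ℚ) with hx'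
      have hr0' : (0:ℚ) < (r:ℚ) := by exact_mod_cast hr0
      have hx'lt : x' < -1 := by
        rw [hx', div_lt_iff₀ hr0']
        have : (r:ℚ) < (q:ℚ) := by exact_mod_cast hrltq
        linarith
      have hx'den : x'.den ≤ n := by
        have hdvd : (x'.den : ℤ) ∣ r := by
          have := Rat.den_dvd (-q) r
          rwa [Rat.divInt_eq_div, Int.cast_neg] at this
        have hle : (x'.den : ℤ) ≤ r := Int.le_of_dvd hr0 hdvd
        have : (x'.den : ℤ) < q := lt_of_le_of_lt hle hrltq
        omega
      obtain ⟨b', hb'ne, hb'le, hb'eq⟩ := ih x' hx'den hx'lt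
      refine ⟨a1 :: b', by simp, ?_, ?_⟩
      · intro i hi
        rcases List.mem_cons.1 hi with h | h
        · subst h
          have : (a1 : ℚ) < -1 := by
            have := Int.floor_le x; linarith
          have : a1 < -1 := by exact_mod_cast this
          omega
        · exact hb'le i h
      · simp only [ncf, hb'eq, hx']
        have hx'0 : -(q:ℚ)/(r:ℚ) ≠ 0 := by
          apply div_ne_zero <;> [skip; positivity]
          intro h; rw [neg_eq_zero] at h; exact absurd h (by positivity)
        rw [one_div, inv_div]
        have : (r:ℚ) / -(q:ℚ) = -((x:ℚ) - a1) := by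
          rw [div_neg, hrq]; field_simp
        rw [this]; ring

/-- every string with entries `≤ -2` admits a complementary
string: if `x = [a₁,…,aₙ]⁻` with all `aᵢ ≤ -2`, there is a string
`(b₁,…,b_m)` with all `b_j ≤ -2` whose continued fraction `y = [b₁,…,b_m]⁻`
satisfies `1/x + 1/y = -1` (and `y < -1`). -/
theorem stmt_7 (a : List ℤ) (ha : a ≠ []) (hlea : ∀ x ∈ a, x ≤ -2) :
    ∃ b : List ℤ, b ≠ [] ∧ (∀ x ∈ b, x ≤ -2) ∧ ncf b < -1 ∧
      1 / ncf a + 1 / ncf b = -1 := by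
  set x := ncf a with hx
  have hxlt : x < -1 := ncf_lt_neg_one_s7 a ha hlea
  have hx0 : x ≠ 0 := by intro h; rw [h] at hxlt; norm_num at hxlt
  have hx1 : x + 1 ≠ 0 := by intro h; nlinarith
  have hx1' : x + 1 < 0 := by linarith
  set y : ℚ := -x / (x + 1) with hy
  have hylt : y < -1 := by
    rw [hy, div_lt_iff_of_neg hx1']
    linarith
  obtain ⟨b, hbne, hble, hbeq⟩ := repr_aux y.den y le_rfl hylt
  refine ⟨b, hbne, hble, by rw [hbeq]; exact hylt, ?_⟩
  rw [hbeq, hy]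
  have hnx : -x ≠ 0 := neg_ne_zero.2 hx0
  field_simp
  ring
end

section
/- Let $\Gamma'$ be a star-shaped graph with central vertex $v$ of weight $w(v) \leq -1$ adjacent to one vertex $v_i$ in each of $k$ linear legs $\Gamma_1, \dots, \Gamma_k$, where every vertex of every leg has weight $\leq -2$. If the intersection matrix of $\Gamma'$ has determinant $0$, then either $w(v) > -k$ or $w(v_j) = -2$ for some $j$. -/
open Matrix

/-- The intersection matrix of a star-shaped weighted graph: a central vertex
(`none`) of weight `b`, and `k` linear legs; leg `i` is a path with `n i`
vertices of weights `w i 0, …, w i (n i - 1)` (consecutive vertices joined by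
an edge), and the centre is joined by an edge to the vertex `t i` of leg `i`. -/
def starMat (k : ℕ) (b : ℤ) (n : Fin k → ℕ) (w : ∀ i, Fin (n i) → ℤ)
    (t : ∀ i, Fin (n i)) :
    Matrix (Option ((i : Fin k) × Fin (n i))) (Option ((i : Fin k) × Fin (n i))) ℚ :=
  Matrix.of fun x y =>
    match x, y with
    | none, none => (b : ℚ)
    | none, some ⟨i, j⟩ => if j = t i then 1 else 0
    | some ⟨i, j⟩, none => if j = t i then 1 else 0
    | some ⟨i, j⟩, some ⟨i', j'⟩ =>
        if i = i' then
          if (j : ℕ) = (j' : ℕ) then (w i j : ℚ)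
          else if (j : ℕ) + 1 = (j' : ℕ) ∨ (j' : ℕ) + 1 = (j : ℕ) then 1 else 0
        else 0

lemma sum_if_nat {m : ℕ} (g : Fin m → ℚ) (a : ℕ) :
    (∑ j : Fin m, if a = (j : ℕ) then g j else 0)
      = if h : a < m then g ⟨a, h⟩ else 0 := by
  split
  · next h =>
    rw [Finset.sum_eq_single ⟨a, h⟩]
    · simp
    · intro j _ hj
      rw [if_neg]
      intro hc
      exact hj (Fin.ext hc.symm)
    · simp
  · next h =>
    apply Finset.sum_eq_zero
    intro j _
    rw [if_neg]
    have := j.isLt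
    omega

/-- let `Γ'` be a star-shaped graph with central vertex `v` of
weight `b ≤ -1` joined to one vertex `t i` in each of `k` linear legs, all of
whose vertices have weight `≤ -2`.  If the intersection matrix of `Γ'` has
determinant `0`, then `b > -k` or some attaching vertex has weight `-2`. -/
theorem stmt_9 (k : ℕ) (b : ℤ) (n : Fin k → ℕ) (w : ∀ i, Fin (n i) → ℤ)
    (t : ∀ i, Fin (n i))
    (hb : b ≤ -1)
    (hw : ∀ i (j : Fin (n i)), w i j ≤ -2)
    (hdet : (starMat k b n w t).det = 0) :
    -(k : ℤ) < b ∨ ∃ j : Fin k, w j (t j) = -2 := by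
  by_contra hcon
  push_neg at hcon
  obtain ⟨hbk, hne2⟩ := hcon
  have h3 : ∀ i, w i (t i) ≤ -3 := fun i => by
    have h1 := hw i (t i); have h2 := hne2 i; omega
  obtain ⟨x, hx0, hxA⟩ := (Matrix.exists_mulVec_eq_zero_iff).2 hdet
  have hne' : (Finset.univ : Finset (Option ((i : Fin k) × Fin (n i)))).Nonempty :=
    ⟨none, Finset.mem_univ _⟩
  set M := Finset.univ.sup' hne' (fun c => |x c|) with hMdef
  have hle : ∀ c, |x c| ≤ M := fun c => Finset.le_sup' (fun c => |x c|) (Finset.mem_univ c)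
  have hMpos : 0 < M := by
    obtain ⟨c, hc⟩ := Function.ne_iff.1 hx0
    exact lt_of_lt_of_le (abs_pos.2 hc) (hle c)
  have row : ∀ c, ∑ d, starMat k b n w t c d * x d = 0 := by
    intro c
    have := congrFun hxA c
    simpa [Matrix.mulVec, dotProduct] using this
  have centerrow : (b:ℚ) * x none + ∑ i, x (some ⟨i, t i⟩) = 0 := by
    have h0 := row none
    rw [Fintype.sum_option, ← Finset.univ_sigma_univ, Finset.sum_sigma] at h0
    have h1 : ∀ i : Fin k, ∑ j' : Fin (n i),
        starMat k b n w t none (some ⟨i, j'⟩) * x (some ⟨i, j'⟩) = x (some ⟨i, t i⟩) := by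
      intro i
      have : ∀ j' : Fin (n i), starMat k b n w t none (some ⟨i, j'⟩) * x (some ⟨i, j'⟩)
          = if j' = t i then x (some ⟨i, j'⟩) else 0 := by
        intro j'
        simp only [starMat, Matrix.of_apply]
        split <;> simp
      rw [Finset.sum_congr rfl (fun j' _ => this j')]
      simp
    rw [Finset.sum_congr rfl (fun i _ => h1 i)] at h0
    have h2 : starMat k b n w t none none = (b:ℚ) := rfl
    rw [h2] at h0
    exact h0
  have legrow : ∀ (i : Fin k) (j : Fin (n i)),
      (w i j : ℚ) * x (some ⟨i, j⟩)
        + (if h : (j:ℕ) + 1 < n i then x (some ⟨i, ⟨(j:ℕ)+1, h⟩⟩) else 0)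
        + (∑ j' : Fin (n i), if (j':ℕ) + 1 = (j:ℕ) then x (some ⟨i, j'⟩) else 0)
        + (if j = t i then x none else 0) = 0 := by
    intro i j
    have h0 := row (some ⟨i, j⟩)
    rw [Fintype.sum_option, ← Finset.univ_sigma_univ, Finset.sum_sigma] at h0
    rw [Finset.sum_eq_single i (fun i' _ hne => by
      apply Finset.sum_eq_zero
      intro j' _
      have : starMat k b n w t (some ⟨i, j⟩) (some ⟨i', j'⟩) = 0 := by
        simp only [starMat, Matrix.of_apply]
        rw [if_neg (fun hc => hne hc.symm)]
      rw [this, zero_mul]) (fun h => absurd (Finset.mem_univ i) h)] at h0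
    have hsummand : ∀ j' : Fin (n i),
        starMat k b n w t (some ⟨i, j⟩) (some ⟨i, j'⟩) * x (some ⟨i, j'⟩)
        = (if (j:ℕ) = (j':ℕ) then (w i j : ℚ) * x (some ⟨i, j'⟩) else 0)
          + (if (j:ℕ)+1 = (j':ℕ) then x (some ⟨i, j'⟩) else 0)
          + (if (j':ℕ)+1 = (j:ℕ) then x (some ⟨i, j'⟩) else 0) := by
      intro j'
      simp only [starMat, Matrix.of_apply]
      rw [if_pos trivial]
      split_ifs <;> (try ring) <;> (exfalso; omega)
    rw [Finset.sum_congr rfl (fun j' _ => hsummand j'), Finset.sum_add_distrib,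
      Finset.sum_add_distrib, sum_if_nat, sum_if_nat] at h0
    rw [dif_pos j.isLt] at h0
    have hnone : starMat k b n w t (some ⟨i, j⟩) none * x none
        = if j = t i then x none else 0 := by
      simp only [starMat, Matrix.of_apply]
      split <;> simp
    rw [hnone] at h0
    have : (⟨(j:ℕ), j.isLt⟩ : Fin (n i)) = j := rfl
    rw [this] at h0
    linarith [h0]
  -- main descent: no vertex of a leg can realise the maximum
  have descend : ∀ (i : Fin k) (jj : ℕ) (h : jj < n i),
      |x (some ⟨i, ⟨jj, h⟩⟩)| = M → False := by
    intro i jj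
    induction jj with
    | zero =>
      intro h hMx
      have hl := legrow i ⟨0, h⟩
      have hQ : (∑ j' : Fin (n i),
          if (j':ℕ) + 1 = ((⟨0, h⟩ : Fin (n i)):ℕ) then x (some ⟨i, j'⟩) else 0) = 0 :=
        Finset.sum_eq_zero (fun j' _ => if_neg (by show ¬((j':ℕ) + 1 = 0); omega))
      rw [hQ, add_zero] at hl
      set W : ℚ := (w i ⟨0, h⟩ : ℚ) with hWdef
      set P : ℚ := (if h' : ((⟨0, h⟩ : Fin (n i)):ℕ) + 1 < n i then
        x (some ⟨i, ⟨((⟨0, h⟩ : Fin (n i)):ℕ)+1, h'⟩⟩) else 0) with hPdef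
      set Z : ℚ := (if (⟨0, h⟩ : Fin (n i)) = t i then x none else 0) with hZdef
      have hPb : |P| ≤ M := by
        rw [hPdef]; split_ifs
        · exact hle _
        · simpa using hMpos.le
      have hZb : |Z| ≤ M := by
        rw [hZdef]; split_ifs
        · exact hle _
        · simpa using hMpos.le
      have key : |W| * M ≤ |P| + |Z| := by
        have h1 : W * x (some ⟨i, ⟨0, h⟩⟩) = -(P + Z) := by linarith
        calc |W| * M = |W| * |x (some ⟨i, ⟨0, h⟩⟩)| := by rw [hMx]
          _ = |W * x (some ⟨i, ⟨0, h⟩⟩)| := (abs_mul _ _).symm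
          _ = |P + Z| := by rw [h1, abs_neg]
          _ ≤ |P| + |Z| := abs_add_le _ _
      by_cases hti : (⟨0, h⟩ : Fin (n i)) = t i
      · have hW3 : W ≤ -3 := by
          rw [hWdef, hti]; exact_mod_cast h3 i
        have hWabs : |W| = -W := abs_of_neg (by linarith)
        rw [hWabs] at key
        nlinarith
      · have hZ0 : Z = 0 := if_neg hti
        have hW2 : W ≤ -2 := by
          rw [hWdef]; exact_mod_cast hw i ⟨0, h⟩
        have hWabs : |W| = -W := abs_of_neg (by linarith)
        rw [hWabs, hZ0, abs_zero, add_zero] at key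
        nlinarith
    | succ m ih =>
      intro h hMx
      have hl := legrow i ⟨m + 1, h⟩
      have hm : m < n i := by omega
      have hQ : (∑ j' : Fin (n i),
          if (j':ℕ) + 1 = ((⟨m + 1, h⟩ : Fin (n i)):ℕ) then x (some ⟨i, j'⟩) else 0)
          = x (some ⟨i, ⟨m, hm⟩⟩) := by
        rw [Finset.sum_congr rfl (fun j' _ => if_congr (by show (j':ℕ) + 1 = m + 1 ↔ m = (j':ℕ); omega) rfl rfl),
          sum_if_nat, dif_pos hm]
      rw [hQ] at hl
      set W : ℚ := (w i ⟨m + 1, h⟩ : ℚ) with hWdef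
      set P : ℚ := (if h' : ((⟨m + 1, h⟩ : Fin (n i)):ℕ) + 1 < n i then
        x (some ⟨i, ⟨((⟨m + 1, h⟩ : Fin (n i)):ℕ)+1, h'⟩⟩) else 0) with hPdef
      set Z : ℚ := (if (⟨m + 1, h⟩ : Fin (n i)) = t i then x none else 0) with hZdef
      set Q : ℚ := x (some ⟨i, ⟨m, hm⟩⟩) with hQdef
      have hPb : |P| ≤ M := by
        rw [hPdef]; split_ifs
        · exact hle _
        · simpa using hMpos.le
      have hQb : |Q| ≤ M := hle _
      have key : |W| * M ≤ |Q| + |P| + |Z| := by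
        have h1 : W * x (some ⟨i, ⟨m + 1, h⟩⟩) = -(Q + P + Z) := by linarith
        calc |W| * M = |W| * |x (some ⟨i, ⟨m + 1, h⟩⟩)| := by rw [hMx]
          _ = |W * x (some ⟨i, ⟨m + 1, h⟩⟩)| := (abs_mul _ _).symm
          _ = |Q + P + Z| := by rw [h1, abs_neg]
          _ ≤ |Q| + |P| + |Z| := by
              calc |Q + P + Z| ≤ |Q + P| + |Z| := abs_add_le _ _
                _ ≤ |Q| + |P| + |Z| := by linarith [abs_add_le Q P]
      have hQge : M ≤ |Q| := by
        by_cases hti : (⟨m + 1, h⟩ : Fin (n i)) = t i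
        · have hW3 : W ≤ -3 := by
            rw [hWdef, hti]; exact_mod_cast h3 i
          have hWabs : |W| = -W := abs_of_neg (by linarith)
          have hZb : |Z| ≤ M := by
            rw [hZdef, if_pos hti]; exact hle _
          rw [hWabs] at key
          nlinarith
        · have hZ0 : Z = 0 := if_neg hti
          have hW2 : W ≤ -2 := by
            rw [hWdef]; exact_mod_cast hw i ⟨m + 1, h⟩
          have hWabs : |W| = -W := abs_of_neg (by linarith)
          rw [hWabs, hZ0, abs_zero, add_zero] at key
          nlinarith
      exact ih hm (le_antisymm hQb hQge)
  -- a vertex realising the maximum exists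
  obtain ⟨c, _, hc⟩ := Finset.exists_mem_eq_sup' hne' (fun c => |x c|)
  rw [← hMdef] at hc
  match c, hc with
  | some ⟨i, j⟩, hc =>
    exact descend i (j : ℕ) j.isLt hc.symm
  | none, hc =>
    rcases Nat.eq_zero_or_pos k with hk | hk
    · -- k = 0 : the matrix is just (b), so x none = 0, contradiction
      have hsum : (∑ i : Fin k, x (some ⟨i, t i⟩)) = 0 := by
        subst hk; simp
      rw [hsum, add_zero] at centerrow
      have hb0 : (b : ℚ) ≠ 0 := by
        intro hb0
        have : b = 0 := by exact_mod_cast hb0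
        omega
      have : x none = 0 := by
        rcases mul_eq_zero.1 centerrow with h | h
        · exact absurd h hb0
        · exact h
      rw [this, abs_zero] at hc
      exact absurd hc (ne_of_gt hMpos)
    · -- k ≥ 1 : some attaching vertex realises the maximum
      have hbQ : (b : ℚ) ≤ -(k : ℚ) := by exact_mod_cast hbk
      have hkQ : (1 : ℚ) ≤ (k : ℚ) := by exact_mod_cast hk
      have habs : (k : ℚ) * M ≤ ∑ i, |x (some ⟨i, t i⟩)| := by
        have h1 : (∑ i, x (some ⟨i, t i⟩)) = -((b:ℚ) * x none) := by linarith
        calc (k : ℚ) * M = (k : ℚ) * |x none| := by rw [← hc]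
          _ ≤ (-(b:ℚ)) * |x none| := by
              apply mul_le_mul_of_nonneg_right (by linarith) (abs_nonneg _)
          _ = |(b:ℚ)| * |x none| := by rw [abs_of_neg (by linarith : (b:ℚ) < 0)]
          _ = |(b:ℚ) * x none| := (abs_mul _ _).symm
          _ = |∑ i, x (some ⟨i, t i⟩)| := by rw [h1, abs_neg]
          _ ≤ ∑ i, |x (some ⟨i, t i⟩)| := Finset.abs_sum_le_sum_abs _ _
      have hex : ∃ i : Fin k, |x (some ⟨i, t i⟩)| = M := by
        by_contra hno
        push_neg at hno
        have hlt : ∀ i : Fin k, |x (some ⟨i, t i⟩)| < M :=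
          fun i => lt_of_le_of_ne (hle _) (hno i)
        have : (∑ i, |x (some ⟨i, t i⟩)|) < ∑ _i : Fin k, M :=
          Finset.sum_lt_sum_of_nonempty
            (Finset.univ_nonempty_iff.2 (Fin.pos_iff_nonempty.1 hk))
            (fun i _ => hlt i)
        rw [Finset.sum_const, Finset.card_univ, Fintype.card_fin, nsmul_eq_mul] at this
        linarith
      obtain ⟨i, hi⟩ := hex
      exact descend i ((t i : ℕ)) (t i).isLt (by
        have : (⟨(t i : ℕ), (t i).isLt⟩ : Fin (n i)) = t i := rfl
        rw [this]; exact hi)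
end
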